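/- Let β ∈ (0,1) and N ≥ 1 an integer. There exists a constant C_β > 0 such that for every non-negative, non-decreasing, absolutely continuous function w : ℝ → ℝ with w(t) = 0 for all t ≤ some t₀, and ∫_ℝ |w'(t)|² dt ≤ N, one has ∫_ℝ (e^{β w(t)²} − 1) e^{−Nt} dt ≤ C_β ∫_ℝ w(t)² e^{−Nt} dt. -/

import Mathlib

open MeasureTheory intervalIntegral

open Set Real Filter in
private lemma integral_exp_neg_mul_Ioi {b : ℝ} (hb : 0 < b) (a : ℝ) :
    ∫ t in Set.Ioi a, Real.exp (-(b * t)) = Real.exp (-(b * a)) / b := by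
  have hderiv : ∀ x ∈ Set.Ioi a, HasDerivAt (fun t => -(Real.exp (-(b * t)) / b))
      (Real.exp (-(b * x))) x := by
    intro x _
    have h1 : HasDerivAt (fun t : ℝ => -(b * t)) (-b) x := by
      simpa [neg_mul] using (hasDerivAt_id x).const_mul (-b)
    have h2 := (Real.hasDerivAt_exp (-(b * x))).comp x h1
    have h3 := (h2.div_const b).fun_neg
    refine h3.congr_deriv ?_
    rw [mul_neg, neg_div, neg_neg, mul_div_assoc, div_self hb.ne', mul_one]
  have hint : IntegrableOn (fun x => Real.exp (-(b * x))) (Set.Ioi a) := by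
    simpa [neg_mul] using exp_neg_integrableOn_Ioi a hb
  have htend : Tendsto (fun t => -(Real.exp (-(b * t)) / b)) atTop (nhds 0) := by
    have h1 : Tendsto (fun t : ℝ => b * t) atTop atTop :=
      Tendsto.const_mul_atTop hb tendsto_id
    have h2 : Tendsto (fun t : ℝ => Real.exp (-(b * t))) atTop (nhds 0) :=
      Real.tendsto_exp_neg_atTop_nhds_zero.comp h1
    simpa using (h2.div_const b).neg
  have hcont : ContinuousWithinAt (fun t => -(Real.exp (-(b * t)) / b)) (Set.Ici a) a :=
    (Continuous.continuousWithinAt (by continuity))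
  have := MeasureTheory.integral_Ioi_of_hasDerivAt_of_tendsto hcont hderiv hint htend
  rw [this]; ring

private lemma holder_key {w w' : ℝ → ℝ} {Nr : ℝ}
    (hftc : ∀ t₁ t₂ : ℝ, t₁ ≤ t₂ → w t₂ - w t₁ = ∫ τ in t₁..t₂, w' τ)
    (hInt : Integrable (fun t => w' t ^ 2))
    (hIntN : (∫ t, w' t ^ 2) ≤ Nr) {s t : ℝ} (hst : s ≤ t) :
    w t - w s ≤ Real.sqrt Nr * Real.sqrt (t - s) := by
  have habs : AEStronglyMeasurable (fun τ => |w' τ|) volume := by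
    have : (fun τ => |w' τ|) = fun τ => Real.sqrt (w' τ ^ 2) := by
      funext τ; rw [Real.sqrt_sq_eq_abs]
    rw [this]
    exact Real.continuous_sqrt.comp_aestronglyMeasurable hInt.aestronglyMeasurable
  set μ := volume.restrict (Set.Ioc s t) with hμ
  haveI : IsFiniteMeasure μ := ⟨by
    rw [hμ, Measure.restrict_apply_univ]; exact measure_Ioc_lt_top⟩
  have hIo : Integrable (fun τ => |w' τ| ^ 2) μ := by
    have : (fun τ => |w' τ| ^ 2) = fun τ => w' τ ^ 2 := by
      funext τ; rw [sq_abs]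
    rw [this]
    exact hInt.restrict
  have hf2 : MemLp (fun τ => |w' τ|) (ENNReal.ofReal 2) μ := by
    have := (memLp_two_iff_integrable_sq habs.restrict).2 hIo
    simpa [ENNReal.ofReal_ofNat] using this
  have hg2 : MemLp (fun _ : ℝ => (1 : ℝ)) (ENNReal.ofReal 2) μ := memLp_const 1
  have hpq : Real.HolderConjugate 2 2 := Real.HolderConjugate.two_two
  have key := integral_mul_le_Lp_mul_Lq_of_nonneg hpq
    (Filter.Eventually.of_forall fun τ => abs_nonneg _)
    (Filter.Eventually.of_forall fun τ => zero_le_one) hf2 hg2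
  have e1 : ∫ a, |w' a| * 1 ∂μ = ∫ a, |w' a| ∂μ := by simp
  have e2 : ∫ a, |w' a| ^ (2:ℝ) ∂μ = ∫ a, w' a ^ 2 ∂μ := by
    congr 1; funext a
    rw [show (2:ℝ) = ((2:ℕ):ℝ) by norm_num, Real.rpow_natCast, sq_abs]
  have e3 : ∫ a, (1:ℝ) ^ (2:ℝ) ∂μ = t - s := by
    simp [hμ, hst, Real.one_rpow, Real.volume_Ioc, ENNReal.toReal_ofReal (sub_nonneg.2 hst)]
  rw [e1, e2, e3] at key
  have h4 : ∫ a, w' a ^ 2 ∂μ ≤ Nr :=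
    le_trans (setIntegral_le_integral hInt
      (Filter.Eventually.of_forall fun x => sq_nonneg _)) hIntN
  have h5 : (∫ a, w' a ^ 2 ∂μ) ^ (1/(2:ℝ)) ≤ Nr ^ (1/(2:ℝ)) :=
    Real.rpow_le_rpow (integral_nonneg fun x => sq_nonneg _) h4 (by norm_num)
  have h6 : w t - w s ≤ ∫ a, |w' a| ∂μ := by
    rw [hftc s t hst, intervalIntegral.integral_of_le hst]
    calc ∫ τ in Set.Ioc s t, w' τ ≤ ‖∫ τ in Set.Ioc s t, w' τ‖ := Real.le_norm_self _
    _ ≤ ∫ τ in Set.Ioc s t, ‖w' τ‖ := norm_integral_le_integral_norm _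
    _ = ∫ a, |w' a| ∂μ := by simp [hμ, Real.norm_eq_abs]
  calc w t - w s ≤ ∫ a, |w' a| ∂μ := h6
  _ ≤ (∫ a, w' a ^ 2 ∂μ) ^ (1/(2:ℝ)) * (t - s) ^ (1/(2:ℝ)) := key
  _ ≤ Nr ^ (1/(2:ℝ)) * (t - s) ^ (1/(2:ℝ)) := by
      apply mul_le_mul_of_nonneg_right h5 (Real.rpow_nonneg (sub_nonneg.2 hst) _)
  _ = Real.sqrt Nr * Real.sqrt (t - s) := by rw [Real.sqrt_eq_rpow, Real.sqrt_eq_rpow]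

set_option maxHeartbeats 1000000 in
theorem exp_weighted_estimate
    (β : ℝ) (hβ0 : 0 < β) (hβ1 : β < 1) (N : ℕ) (hN : 1 ≤ N) :
    ∃ C > (0 : ℝ), ∀ w w' : ℝ → ℝ,
      (∀ t : ℝ, 0 ≤ w t) →
      Monotone w →
      (∃ t₀ : ℝ, ∀ t ≤ t₀, w t = 0) →
      (∀ t₁ t₂ : ℝ, t₁ ≤ t₂ → w t₂ - w t₁ = ∫ τ in t₁..t₂, w' τ) →
      Integrable (fun t => w' t ^ 2) →
      (∫ t, w' t ^ 2) ≤ N →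
      (∫ t, (Real.exp (β * w t ^ 2) - 1) * Real.exp (-(N : ℝ) * t)) ≤
        C * ∫ t, w t ^ 2 * Real.exp (-(N : ℝ) * t) := by
  set γ : ℝ := (1 + β) / 2 with hγdef
  set K : ℝ := β * (1 + β) / (1 - β) with hKdef
  have hβ1' : (0:ℝ) < 1 - β := by linarith
  have h1γ : (0:ℝ) < 1 - γ := by rw [hγdef]; linarith
  have hγ0 : 0 < γ := by rw [hγdef]; linarith
  refine ⟨β * Real.exp β + Real.exp K / (1 - γ),
    add_pos (mul_pos hβ0 (Real.exp_pos β)) (div_pos (Real.exp_pos K) h1γ), ?_⟩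
  intro w w' hw0 hmono ht₀ hftc hInt hIntN
  obtain ⟨t₀, hvan⟩ := ht₀
  have hN1 : (1:ℝ) ≤ (N:ℝ) := by exact_mod_cast hN
  have hN0 : (0:ℝ) < (N:ℝ) := by linarith
  set f : ℝ → ℝ := fun t => (Real.exp (β * w t ^ 2) - 1) * Real.exp (-(N : ℝ) * t) with hfdef
  set g : ℝ → ℝ := fun t => w t ^ 2 * Real.exp (-(N : ℝ) * t) with hgdef
  have key : ∀ s t : ℝ, s ≤ t → w t - w s ≤ Real.sqrt N * Real.sqrt (t - s) :=
    fun s t hst => holder_key hftc hInt hIntN hst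
  -- continuity of w
  have hcont : Continuous w := by
    rw [Metric.continuous_iff]
    intro a ε hε
    refine ⟨ε^2 / (N + 1), by positivity, fun t ht => ?_⟩
    have habs : |w t - w a| ≤ Real.sqrt N * Real.sqrt |t - a| := by
      rcases le_total a t with h | h
      · rw [abs_of_nonneg (sub_nonneg.2 (hmono h)), abs_of_nonneg (sub_nonneg.2 h)]
        exact key a t h
      · rw [abs_of_nonpos (sub_nonpos.2 (hmono h)), abs_of_nonpos (sub_nonpos.2 h),
          neg_sub, neg_sub]
        exact key t a h
    rw [Real.dist_eq] at ht ⊢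
    calc |w t - w a| ≤ Real.sqrt N * Real.sqrt |t - a| := habs
    _ = Real.sqrt ((N:ℝ) * |t - a|) := (Real.sqrt_mul hN0.le _).symm
    _ < ε := by
        rw [show ε = Real.sqrt (ε^2) from (Real.sqrt_sq hε.le).symm]
        apply Real.sqrt_lt_sqrt (by positivity)
        calc (N:ℝ) * |t - a| < (N:ℝ) * (ε^2/(N+1)) := by
              exact mul_lt_mul_of_pos_left ht hN0
        _ = ((N:ℝ)/((N:ℝ)+1)) * ε^2 := by ring
        _ < 1 * ε^2 := by
              apply mul_lt_mul_of_pos_right _ (by positivity)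
              rw [div_lt_one (by positivity)]; linarith
        _ = ε^2 := one_mul _
  have hg_cont : Continuous g := by
    rw [hgdef]; fun_prop
  have hf_cont : Continuous f := by
    rw [hfdef]; fun_prop
  have hg_nonneg : ∀ t, 0 ≤ g t := fun t =>
    mul_nonneg (sq_nonneg _) (Real.exp_pos _).le
  have hf_nonneg : ∀ t, 0 ≤ f t := fun t =>
    mul_nonneg (by
      have : (1:ℝ) ≤ Real.exp (β * w t ^ 2) :=
        Real.one_le_exp (by positivity)
      linarith) (Real.exp_pos _).le
  -- square growth bound
  have hwsq : ∀ t, t₀ ≤ t → w t ^ 2 ≤ (N:ℝ) * (t - t₀) := by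
    intro t ht
    have h1 : w t ≤ Real.sqrt N * Real.sqrt (t - t₀) := by
      have := key t₀ t ht
      rw [hvan t₀ le_rfl] at this; linarith
    calc w t ^ 2 ≤ (Real.sqrt N * Real.sqrt (t - t₀)) ^ 2 := by
          apply pow_le_pow_left₀ (hw0 t) h1
    _ = (N:ℝ) * (t - t₀) := by
          rw [mul_pow, Real.sq_sqrt hN0.le, Real.sq_sqrt (sub_nonneg.2 ht)]
  -- integrability of g
  have hg_int : Integrable g := by
    have h1 : IntegrableOn g (Set.Iic t₀) := by
      apply IntegrableOn.congr_fun (integrableOn_zero (ε' := ℝ)) ?_ measurableSet_Iic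
      intro x hx
      simp [hgdef, hvan x hx]
    have h2 : IntegrableOn g (Set.Ioi t₀) := by
      have hmaj : IntegrableOn
          (fun t => (2*(N:ℝ)*Real.exp (-t₀/2)) * Real.exp (-(((N:ℝ) - 1/2) * t)))
          (Set.Ioi t₀) := by
        apply Integrable.const_mul
        simpa only [neg_mul, IntegrableOn] using
          exp_neg_integrableOn_Ioi t₀ (show (0:ℝ) < (N:ℝ) - 1/2 by linarith)
      apply Integrable.mono' hmaj hg_cont.aestronglyMeasurable.restrict
      refine (ae_restrict_iff' measurableSet_Ioi).2 (Filter.Eventually.of_forall fun t ht => ?_)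
      rw [Real.norm_eq_abs, abs_of_nonneg (hg_nonneg t)]
      have hle1 : g t ≤ ((N:ℝ)*(t-t₀)) * Real.exp (-(N:ℝ)*t) :=
        mul_le_mul_of_nonneg_right (hwsq t (le_of_lt ht)) (Real.exp_pos _).le
      have hle2 : (t - t₀) ≤ 2*Real.exp ((t-t₀)/2) := by
        have h := Real.add_one_le_exp ((t-t₀)/2); linarith
      calc g t ≤ ((N:ℝ)*(t-t₀)) * Real.exp (-(N:ℝ)*t) := hle1
      _ ≤ ((N:ℝ)*(2*Real.exp ((t-t₀)/2))) * Real.exp (-(N:ℝ)*t) := by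
          apply mul_le_mul_of_nonneg_right _ (Real.exp_pos _).le
          exact mul_le_mul_of_nonneg_left hle2 hN0.le
      _ = (2*(N:ℝ)) * Real.exp ((t-t₀)/2 + (-(N:ℝ)*t)) := by rw [Real.exp_add]; ring
      _ = (2*(N:ℝ)*Real.exp (-t₀/2)) * Real.exp (-(((N:ℝ) - 1/2) * t)) := by
          rw [show (t-t₀)/2 + (-(N:ℝ)*t) = -t₀/2 + -(((N:ℝ) - 1/2) * t) from by ring,
            Real.exp_add]; ring
    have h3 := h1.union h2
    rwa [Set.Iic_union_Ioi, integrableOn_univ] at h3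
  -- pointwise bound where w ≤ 1
  have hpt : ∀ t, w t ≤ 1 → f t ≤ (β * Real.exp β) * g t := by
    intro t hwt
    have hx0 : 0 ≤ β * w t ^ 2 := by positivity
    have hw2le : w t ^ 2 ≤ 1 := by nlinarith [hw0 t]
    have hx1 : β * w t ^ 2 ≤ β := by nlinarith [hw2le]
    have hE : Real.exp (-(β * w t ^ 2)) * Real.exp (β * w t ^ 2) = 1 := by
      rw [← Real.exp_add]; simp
    have h1 : Real.exp (β * w t ^ 2) - 1 ≤ (β * w t ^ 2) * Real.exp (β * w t ^ 2) := by
      have h := Real.add_one_le_exp (-(β * w t ^ 2))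
      nlinarith [Real.exp_pos (β * w t ^ 2), Real.exp_pos (-(β * w t ^ 2))]
    have h2 : Real.exp (β * w t ^ 2) ≤ Real.exp β := Real.exp_le_exp.2 hx1
    calc f t = (Real.exp (β * w t ^ 2) - 1) * Real.exp (-(N:ℝ)*t) := rfl
    _ ≤ ((β * w t ^ 2) * Real.exp β) * Real.exp (-(N:ℝ)*t) := by
        apply mul_le_mul_of_nonneg_right _ (Real.exp_pos _).le
        exact le_trans h1 (mul_le_mul_of_nonneg_left h2 hx0)
    _ = (β * Real.exp β) * g t := by rw [hgdef]; ring
  have hCβ : β * Real.exp β ≤ β * Real.exp β + Real.exp K / (1 - γ) := by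
    have : 0 < Real.exp K / (1 - γ) := div_pos (Real.exp_pos K) h1γ
    linarith
  by_cases hca : ∀ t, w t ≤ 1
  · -- small case
    calc (∫ t, f t) ≤ ∫ t, (β * Real.exp β) * g t :=
        integral_mono_of_nonneg (Filter.Eventually.of_forall hf_nonneg)
          (hg_int.const_mul _) (Filter.Eventually.of_forall fun t => hpt t (hca t))
    _ = (β * Real.exp β) * ∫ t, g t := MeasureTheory.integral_const_mul _ _
    _ ≤ (β * Real.exp β + Real.exp K / (1 - γ)) * ∫ t, g t :=
        mul_le_mul_of_nonneg_right hCβ (integral_nonneg hg_nonneg)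
  · -- big case
    push_neg at hca
    obtain ⟨t', ht'⟩ := hca
    set S : Set ℝ := {t : ℝ | w t ≤ 1} with hSdef
    have hSne : S.Nonempty := ⟨t₀, by simp [hSdef, hvan t₀ le_rfl]⟩
    have hSbdd : BddAbove S := by
      refine ⟨t', fun s hs => ?_⟩
      by_contra hh
      push_neg at hh
      exact absurd (le_trans (hmono hh.le) hs) (not_le.2 ht')
    set t₁ : ℝ := sSup S with ht₁def
    have hSclosed : IsClosed S := IsClosed.preimage hcont isClosed_Iic
    have ht₁mem : w t₁ ≤ 1 := hSclosed.csSup_mem hSne hSbdd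
    have hle : ∀ t, t ≤ t₁ → w t ≤ 1 := fun t ht => le_trans (hmono ht) ht₁mem
    have hgt : ∀ t, t₁ < t → 1 < w t := by
      intro t ht
      by_contra hh
      push_neg at hh
      exact absurd (le_csSup hSbdd hh) (not_le.2 ht)
    set b : ℝ := (1 - γ) * N with hbdef
    have hb : 0 < b := by rw [hbdef]; exact mul_pos h1γ hN0
    -- tail exponent bound
    have htail : ∀ t, t₁ < t → β * w t ^ 2 ≤ K + γ * N * (t - t₁) := by
      intro t ht
      obtain ⟨sq, hsqdef⟩ : ∃ s, s = Real.sqrt (N:ℝ) * Real.sqrt (t - t₁) := ⟨_, rfl⟩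
      have hs0 : 0 ≤ sq := hsqdef ▸ mul_nonneg (Real.sqrt_nonneg _) (Real.sqrt_nonneg _)
      have hs2 : sq ^ 2 = (N:ℝ) * (t - t₁) := by
        rw [hsqdef, mul_pow, Real.sq_sqrt hN0.le, Real.sq_sqrt (sub_nonneg.2 ht.le)]
      have hwb : w t ≤ 1 + sq := by
        have h := key t₁ t ht.le; rw [← hsqdef] at h; linarith
      have hw2 : w t ^ 2 ≤ (1 + sq) ^ 2 := by nlinarith [hw0 t]
      have e1 : 2*(1-β)*K = 2*(β*(1+β)) := by
        rw [hKdef]; field_simp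
      have e2 : (2*(1-β)*γ) * (↑N * (t - t₁)) = ((1-β)*(1+β)) * sq^2 := by
        rw [hγdef, hs2]; ring
      have h1 : 2*(1-β)*(β * w t ^ 2) ≤ 2*(1-β)*β*(1+sq)^2 := by
        have h2 := mul_le_mul_of_nonneg_left hw2 (show (0:ℝ) ≤ 2*(1-β)*β by positivity)
        linarith [h2]
      have hgoal : 2*(1-β)*(β * w t ^ 2) ≤ 2*(1-β)*(K + γ * ↑N * (t - t₁)) := by
        nlinarith [sq_nonneg ((1-β)*sq - 2*β), h1, e1, e2]
      exact le_of_mul_le_mul_left hgoal (show (0:ℝ) < 2*(1-β) by linarith)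
    -- tail pointwise bound
    have hfpt : ∀ t, t₁ < t →
        f t ≤ Real.exp (K - γ * N * t₁) * Real.exp (-(b * t)) := by
      intro t ht
      have h1 : f t ≤ Real.exp (β * w t ^ 2) * Real.exp (-(N:ℝ)*t) := by
        apply mul_le_mul_of_nonneg_right _ (Real.exp_pos _).le
        linarith [hf_nonneg t]
      calc f t ≤ Real.exp (β * w t ^ 2) * Real.exp (-(N:ℝ)*t) := h1
      _ ≤ Real.exp (K + γ * N * (t - t₁)) * Real.exp (-(N:ℝ)*t) := by
          apply mul_le_mul_of_nonneg_right (Real.exp_le_exp.2 (htail t ht)) (Real.exp_pos _).le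
      _ = Real.exp (K - γ * N * t₁) * Real.exp (-(b * t)) := by
          rw [← Real.exp_add, ← Real.exp_add]
          congr 1
          rw [hbdef]; ring
    -- integrability of f
    have hf1 : IntegrableOn f (Set.Iic t₁) := by
      apply Integrable.mono' ((hg_int.const_mul (β * Real.exp β)).integrableOn)
        hf_cont.aestronglyMeasurable.restrict
      refine (ae_restrict_iff' measurableSet_Iic).2 (Filter.Eventually.of_forall fun t ht => ?_)
      rw [Real.norm_eq_abs, abs_of_nonneg (hf_nonneg t)]
      exact hpt t (hle t ht)
    have hmaj2 : IntegrableOn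
        (fun t => Real.exp (K - γ * N * t₁) * Real.exp (-(b * t))) (Set.Ioi t₁) := by
      apply Integrable.const_mul
      simpa only [neg_mul, IntegrableOn] using exp_neg_integrableOn_Ioi t₁ hb
    have hf2 : IntegrableOn f (Set.Ioi t₁) := by
      apply Integrable.mono' hmaj2 hf_cont.aestronglyMeasurable.restrict
      refine (ae_restrict_iff' measurableSet_Ioi).2 (Filter.Eventually.of_forall fun t ht => ?_)
      rw [Real.norm_eq_abs, abs_of_nonneg (hf_nonneg t)]
      exact hfpt t ht
    have hf_int : Integrable f := by
      have h3 := hf1.union hf2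
      rwa [Set.Iic_union_Ioi, integrableOn_univ] at h3
    -- split
    have hsplit : (∫ t, f t) = (∫ t in Set.Iic t₁, f t) + ∫ t in Set.Ioi t₁, f t :=
      (integral_Iic_add_Ioi hf1 hf2).symm
    -- part 1
    have hpart1 : (∫ t in Set.Iic t₁, f t) ≤ (β * Real.exp β) * ∫ t, g t := by
      calc (∫ t in Set.Iic t₁, f t) ≤ ∫ t in Set.Iic t₁, (β * Real.exp β) * g t := by
            apply setIntegral_mono_on hf1 ((hg_int.const_mul _).integrableOn)
              measurableSet_Iic (fun t ht => hpt t (hle t ht))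
      _ = (β * Real.exp β) * ∫ t in Set.Iic t₁, g t := MeasureTheory.integral_const_mul _ _
      _ ≤ (β * Real.exp β) * ∫ t, g t := by
          apply mul_le_mul_of_nonneg_left
            (setIntegral_le_integral hg_int (Filter.Eventually.of_forall hg_nonneg))
            (by positivity)
    -- part 2
    have hpart2 : (∫ t in Set.Ioi t₁, f t) ≤
        Real.exp (K - γ * N * t₁) * (Real.exp (-(b * t₁)) / b) := by
      calc (∫ t in Set.Ioi t₁, f t)
          ≤ ∫ t in Set.Ioi t₁, Real.exp (K - γ * N * t₁) * Real.exp (-(b * t)) := by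
            apply setIntegral_mono_on hf2 hmaj2 measurableSet_Ioi (fun t ht => hfpt t ht)
      _ = Real.exp (K - γ * N * t₁) * ∫ t in Set.Ioi t₁, Real.exp (-(b * t)) :=
          MeasureTheory.integral_const_mul _ _
      _ = Real.exp (K - γ * N * t₁) * (Real.exp (-(b * t₁)) / b) := by
          rw [integral_exp_neg_mul_Ioi hb]
    -- lower bound for ∫ g
    have hlow : Real.exp (-(N:ℝ) * t₁) / N ≤ ∫ t, g t := by
      have hexpint : IntegrableOn (fun t => Real.exp (-(N:ℝ) * t)) (Set.Ioi t₁) := by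
        exact exp_neg_integrableOn_Ioi t₁ hN0
      have h1 : (∫ t in Set.Ioi t₁, Real.exp (-(N:ℝ)*t)) ≤ ∫ t in Set.Ioi t₁, g t := by
        apply setIntegral_mono_on hexpint hg_int.integrableOn measurableSet_Ioi
        intro t ht
        have hwt := hgt t ht
        have hw1 : 1 ≤ w t ^ 2 := by nlinarith
        calc Real.exp (-(N:ℝ)*t) = 1 * Real.exp (-(N:ℝ)*t) := (one_mul _).symm
        _ ≤ g t := mul_le_mul_of_nonneg_right hw1 (Real.exp_pos _).le
      have h2 : (∫ t in Set.Ioi t₁, Real.exp (-(N:ℝ)*t)) = Real.exp (-(N:ℝ)*t₁) / N := by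
        have := integral_exp_neg_mul_Ioi hN0 t₁
        simpa only [neg_mul] using this
      rw [← h2]
      exact le_trans h1 (setIntegral_le_integral hg_int (Filter.Eventually.of_forall hg_nonneg))
    -- combine
    have hId : Real.exp (K - γ * N * t₁) * (Real.exp (-(b * t₁)) / b) =
        (Real.exp K / (1 - γ)) * (Real.exp (-(N:ℝ) * t₁) / N) := by
      have h1 : Real.exp (K - γ * ↑N * t₁) * Real.exp (-(b * t₁))
          = Real.exp K * Real.exp (-(N:ℝ) * t₁) := by
        rw [← Real.exp_add, ← Real.exp_add, hbdef]
        congr 1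
        ring
      calc Real.exp (K - γ * ↑N * t₁) * (Real.exp (-(b * t₁)) / b)
          = (Real.exp (K - γ * ↑N * t₁) * Real.exp (-(b * t₁))) / ((1-γ) * ↑N) := by
            rw [hbdef]; ring
      _ = (Real.exp K * Real.exp (-(N:ℝ) * t₁)) / ((1-γ) * ↑N) := by rw [h1]
      _ = (Real.exp K / (1 - γ)) * (Real.exp (-(N:ℝ) * t₁) / N) := by
            rw [div_mul_div_comm]
    have hfinal : (∫ t, f t) ≤
        ((β * Real.exp β) * ∫ t, g t) + (Real.exp K / (1 - γ)) * (Real.exp (-(N:ℝ) * t₁) / N) := by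
      rw [hsplit]
      have := hpart2
      rw [hId] at this
      linarith [hpart1]
    calc (∫ t, f t) ≤
        ((β * Real.exp β) * ∫ t, g t) + (Real.exp K / (1 - γ)) * (Real.exp (-(N:ℝ) * t₁) / N) :=
        hfinal
    _ ≤ ((β * Real.exp β) * ∫ t, g t) + (Real.exp K / (1 - γ)) * ∫ t, g t := by
        apply add_le_add le_rfl
        exact mul_le_mul_of_nonneg_left hlow (by positivity)
    _ = (β * Real.exp β + Real.exp K / (1 - γ)) * ∫ t, g t := by ring
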